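/- Let n, k, l be integers with 1 ≤ k < l ≤ n−1 and n = k + l. Then the automorphism group of the set-inclusion graph G(n,k,l) is isomorphic to Sym([n]) × ℤ₂. -/

import Mathlib

open SimpleGraph

/-- The set-inclusion graph `G(n,k,l)`: vertices are all `k`-element subsets and all
`l`-element subsets of `[n]`, two distinct vertices being adjacent iff one is contained
in the other. -/
def setInclusionGraph (n k l : ℕ) :
    SimpleGraph {s : Finset (Fin n) // s.card = k ∨ s.card = l} where
  Adj v w := v.1 ⊂ w.1 ∨ w.1 ⊂ v.1
  symm := ⟨by intro v w h; tauto⟩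
  loopless := ⟨by intro v h; rcases h with h | h <;> exact h.ne rfl⟩

namespace Stmt8

variable {n k l : ℕ}

lemma map_ssubset_map {σ : Equiv.Perm (Fin n)} {s t : Finset (Fin n)} :
    s.map σ.toEmbedding ⊂ t.map σ.toEmbedding ↔ s ⊂ t := by
  simp only [Finset.ssubset_def, Finset.map_subset_map]

lemma compl_ssubset_compl {s t : Finset (Fin n)} : sᶜ ⊂ tᶜ ↔ t ⊂ s := by
  rw [← Finset.lt_iff_ssubset, ← Finset.lt_iff_ssubset]
  exact compl_lt_compl_iff_lt

/-- automorphism from a permutation -/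
def permAut (σ : Equiv.Perm (Fin n)) :
    setInclusionGraph n k l ≃g setInclusionGraph n k l where
  toEquiv := Equiv.subtypeEquiv (σ.finsetCongr) (by
    intro s
    simp [Equiv.finsetCongr_apply, Finset.card_map])
  map_rel_iff' := by
    intro v w
    show ((_ : Finset (Fin n)) ⊂ _ ∨ (_ : Finset (Fin n)) ⊂ _) ↔ ((_ : Finset (Fin n)) ⊂ _ ∨ (_ : Finset (Fin n)) ⊂ _)
    simp only [Equiv.subtypeEquiv_apply, Equiv.finsetCongr_apply, map_ssubset_map]

/-- equiv on finsets given by complement -/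
def complEquiv : Finset (Fin n) ≃ Finset (Fin n) :=
  Function.Involutive.toPerm _ (fun s : Finset (Fin n) => compl_compl s)

lemma card_compl' (hsum : n = k + l) {s : Finset (Fin n)}
    (h : s.card = k ∨ s.card = l) : sᶜ.card = k ∨ sᶜ.card = l := by
  rcases h with h | h <;> rw [Finset.card_compl, h] <;> simp [Fintype.card_fin] <;> omega

/-- complement automorphism -/
def complAut (hsum : n = k + l) :
    setInclusionGraph n k l ≃g setInclusionGraph n k l where
  toEquiv := Equiv.subtypeEquiv complEquiv (by
    intro s
    constructor
    · intro h; exact card_compl' hsum h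
    · intro h
      have := card_compl' hsum (s := sᶜ) (by exact h)
      simpa using this)
  map_rel_iff' := by
    intro v w
    show ((_ : Finset (Fin n)) ⊂ _ ∨ (_ : Finset (Fin n)) ⊂ _) ↔ ((_ : Finset (Fin n)) ⊂ _ ∨ (_ : Finset (Fin n)) ⊂ _)
    simp only [Equiv.subtypeEquiv_apply]
    show (v.1ᶜ ⊂ w.1ᶜ ∨ w.1ᶜ ⊂ v.1ᶜ) ↔ _
    rw [compl_ssubset_compl, compl_ssubset_compl]
    tauto

end Stmt8

namespace Stmt8

lemma aut_ext {f g : setInclusionGraph n k l ≃g setInclusionGraph n k l}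
    (h : ∀ v, (f v).1 = (g v).1) : f = g :=
  RelIso.ext fun v => Subtype.ext (h v)

@[simp] lemma permAut_apply (σ : Equiv.Perm (Fin n)) (v) :
    ((permAut (k := k) (l := l) σ) v).1 = v.1.map σ.toEmbedding := rfl

@[simp] lemma complAut_apply (hsum : n = k + l) (v) :
    ((complAut (k := k) (l := l) hsum) v).1 = v.1ᶜ := rfl

lemma map_compl (σ : Equiv.Perm (Fin n)) (s : Finset (Fin n)) :
    sᶜ.map σ.toEmbedding = (s.map σ.toEmbedding)ᶜ := by
  ext x
  simp [Finset.mem_map_equiv]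

/-- the permutation part as a hom -/
def permHom : Equiv.Perm (Fin n) →* (setInclusionGraph n k l ≃g setInclusionGraph n k l) where
  toFun := permAut
  map_one' := aut_ext fun v => by
    show v.1.map (Equiv.toEmbedding 1) = v.1
    have : (Equiv.toEmbedding (1 : Equiv.Perm (Fin n))) = Function.Embedding.refl _ := by
      ext x; rfl
    rw [this, Finset.map_refl]
  map_mul' σ τ := aut_ext fun v => by
    show v.1.map _ = (v.1.map _).map _
    rw [Finset.map_map]
    rfl

lemma complAut_mul_self (hsum : n = k + l) : complAut (k := k) (l := l) hsum * complAut hsum = 1 :=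
  aut_ext fun v => by
    show (v.1ᶜ)ᶜ = v.1
    simp

lemma zmod2_cases (a : ZMod 2) : a = 0 ∨ a = 1 := by fin_cases a <;> [exact Or.inl rfl; exact Or.inr rfl]

/-- the Z2 part as a hom -/
def zmodHom (hsum : n = k + l) :
    Multiplicative (ZMod 2) →* (setInclusionGraph n k l ≃g setInclusionGraph n k l) where
  toFun ε := if ε.toAdd = 1 then complAut hsum else 1
  map_one' := by simp
  map_mul' x y := by
    rcases zmod2_cases x.toAdd with hx | hx <;> rcases zmod2_cases y.toAdd with hy | hy <;>
      simp [toAdd_mul, hx, hy, complAut_mul_self hsum]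
  
lemma perm_compl_commute (hsum : n = k + l) (σ : Equiv.Perm (Fin n)) (ε : Multiplicative (ZMod 2)) :
    Commute (permHom (k := k) (l := l) σ) (zmodHom hsum ε) := by
  rcases zmod2_cases ε.toAdd with hx | hx
  · simp [zmodHom, hx, Commute, SemiconjBy]
  · simp only [zmodHom, hx, MonoidHom.coe_mk, OneHom.coe_mk, if_pos]
    exact aut_ext fun v => map_compl σ v.1

/-- the full homomorphism -/
def ψ (hsum : n = k + l) :
    Equiv.Perm (Fin n) × Multiplicative (ZMod 2) →*
      (setInclusionGraph n k l ≃g setInclusionGraph n k l) :=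
  MonoidHom.noncommCoprod permHom (zmodHom hsum) (perm_compl_commute hsum)

end Stmt8

namespace Stmt8

lemma psi_injective (hk : 1 ≤ k) (hkl : k < l) (hsum : n = k + l) :
    Function.Injective (ψ (n := n) (k := k) (l := l) hsum) := by
  rw [injective_iff_map_eq_one]
  rintro ⟨σ, ε⟩ h
  have hkn : k ≤ n := by omega
  -- a k-set exists
  obtain ⟨s₀, -, hs₀⟩ := Finset.exists_subset_card_eq
    (s := (Finset.univ : Finset (Fin n))) (n := k) (by simp; omega)
  have happ : ∀ v : {s : Finset (Fin n) // s.card = k ∨ s.card = l},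
      ((ψ hsum (σ, ε)) v).1 = v.1 := fun v => by rw [h]; rfl
  have hε : ε.toAdd = 0 := by
    by_contra hε1
    rcases zmod2_cases ε.toAdd with h0 | h1
    · exact hε1 h0
    · have := happ ⟨s₀, Or.inl hs₀⟩
      have hval : ((ψ hsum (σ, ε)) ⟨s₀, Or.inl hs₀⟩).1 = (s₀ᶜ).map σ.toEmbedding := by
        show ((permHom (k := k) (l := l) σ * zmodHom hsum ε) ⟨s₀, Or.inl hs₀⟩).1 = _
        rw [RelIso.mul_apply]
        show ((permHom σ) ((zmodHom hsum ε) ⟨s₀, Or.inl hs₀⟩)).1 = _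
        simp only [zmodHom, MonoidHom.coe_mk, OneHom.coe_mk, h1, if_pos]
        rfl
      rw [hval] at this
      have hcard : ((s₀ᶜ).map σ.toEmbedding).card = l := by
        rw [Finset.card_map, Finset.card_compl, hs₀, Fintype.card_fin]; omega
      rw [this, hs₀] at hcard
      omega
  have hεone : ε = 1 := by
    have : ε.toAdd = (1 : Multiplicative (ZMod 2)).toAdd := by simpa using hε
    exact Multiplicative.toAdd.injective this
  subst hεone
  have hperm : ∀ v : {s : Finset (Fin n) // s.card = k ∨ s.card = l},
      v.1.map σ.toEmbedding = v.1 := by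
    intro v
    have := happ v
    rwa [show ((ψ hsum (σ, 1)) v).1 = v.1.map σ.toEmbedding from rfl] at this
  have hσ : σ = 1 := by
    ext x
    by_contra hx
    have hcard2 : k - 1 ≤ ((Finset.univ : Finset (Fin n)) \ {x, σ x}).card := by
      have : ({x, σ x} : Finset (Fin n)).card ≤ 2 := Finset.card_insert_le _ _ |>.trans (by simp)
      have h2 : ((Finset.univ : Finset (Fin n)) \ {x, σ x}).card =
          n - ({x, σ x} : Finset (Fin n)).card := by
        rw [Finset.card_sdiff_of_subset (by simp), Finset.card_univ, Fintype.card_fin]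
      omega
    obtain ⟨t, ht, htc⟩ := Finset.exists_subset_card_eq hcard2
    have hxt : x ∉ t := fun hxt => by simpa using (ht hxt)
    have hst : (insert x t).card = k := by rw [Finset.card_insert_of_notMem hxt, htc]; omega
    have heq : (insert x t).map σ.toEmbedding = insert x t := hperm ⟨insert x t, Or.inl hst⟩
    have hmem : σ x ∈ insert x t := by
      rw [← heq]
      exact Finset.mem_map_of_mem _ (Finset.mem_insert_self x t)
    rcases Finset.mem_insert.1 hmem with h' | h'
    · exact hx (congrArg _ h')
    · have := ht h'
      simp at this
  exact Prod.ext hσ rfl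

end Stmt8

namespace Stmt8

lemma choose_lt {a b r : ℕ} (hr : 1 ≤ r) (hra : r ≤ a) (hab : a < b) :
    Nat.choose a r < Nat.choose b r := by
  obtain ⟨m, rfl⟩ : ∃ m, r = m + 1 := ⟨r - 1, by omega⟩
  have h1 : Nat.choose a (m + 1) < Nat.choose (a + 1) (m + 1) := by
    rw [Nat.choose_succ_succ]
    have : 0 < Nat.choose a m := Nat.choose_pos (by omega)
    simp only [Nat.succ_eq_add_one]
    omega
  exact h1.trans_le (Nat.choose_le_choose _ (by omega))

lemma count_supersets {n m : ℕ} (U : Finset (Fin n)) (h : U.card ≤ m) :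
    (Finset.univ.filter (fun L : Finset (Fin n) => L.card = m ∧ U ⊆ L)).card
      = Nat.choose (n - U.card) (m - U.card) := by
  have hc : (Uᶜ : Finset (Fin n)).card = n - U.card := by
    rw [Finset.card_compl, Fintype.card_fin]
  rw [← hc, ← Finset.card_powersetCard]
  apply Finset.card_nbij' (fun L => L \ U) (fun T => U ∪ T)
  · intro L hL
    simp only [Finset.mem_coe, Finset.mem_filter, Finset.mem_univ, true_and] at hL
    rw [Finset.mem_coe, Finset.mem_powersetCard]
    refine ⟨fun x hx => ?_, ?_⟩
    · rw [Finset.mem_compl]; exact (Finset.mem_sdiff.1 hx).2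
    · rw [Finset.card_sdiff_of_subset hL.2, hL.1]
  · intro T hT
    rw [Finset.mem_coe, Finset.mem_powersetCard] at hT
    have hdisj : Disjoint U T := by
      rw [Finset.disjoint_right]; intro x hx hxU; exact (Finset.mem_compl.1 (hT.1 hx)) hxU
    simp only [Finset.mem_coe, Finset.mem_filter, Finset.mem_univ, true_and]
    refine ⟨?_, Finset.subset_union_left⟩
    rw [Finset.card_union_of_disjoint hdisj, hT.2]
    omega
  · intro L hL
    simp only [Finset.mem_coe, Finset.mem_filter, Finset.mem_univ, true_and] at hL
    exact Finset.union_sdiff_of_subset hL.2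
  · intro T hT
    rw [Finset.mem_coe, Finset.mem_powersetCard] at hT
    apply Finset.union_sdiff_cancel_left
    rw [Finset.disjoint_right]; intro x hx hxU; exact (Finset.mem_compl.1 (hT.1 hx)) hxU

lemma eq_of_same_supersets {n m : ℕ} (hm : m + 2 ≤ n) {A A' : Finset (Fin n)}
    (hA : A.card = m) (hA' : A'.card = m)
    (h : ∀ s : Finset (Fin n), s.card = m + 1 → A ⊆ s → A' ⊆ s) : A' ⊆ A := by
  by_contra hc
  obtain ⟨x, hxA', hxA⟩ := Finset.not_subset.1 hc
  have hcard : (insert x A).card ≤ m + 1 := by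
    apply (Finset.card_insert_le _ _).trans; omega
  have hne : ((insert x A)ᶜ : Finset (Fin n)).Nonempty := by
    rw [← Finset.card_pos, Finset.card_compl, Fintype.card_fin]; omega
  obtain ⟨y, hy⟩ := hne
  rw [Finset.mem_compl, Finset.mem_insert, not_or] at hy
  have hyA : y ∉ A := hy.2
  have hs : (insert y A).card = m + 1 := by rw [Finset.card_insert_of_notMem hyA, hA]
  have := h (insert y A) hs (Finset.subset_insert _ _) hxA'
  rcases Finset.mem_insert.1 this with h' | h'
  · exact hy.1 h'.symm
  · exact hxA h'

lemma card_union_of_card_inter {α : Type*} [DecidableEq α] {s t : Finset α} :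
    (s ∪ t).card + (s ∩ t).card = s.card + t.card := by
  rw [add_comm]
  exact Finset.card_inter_add_card_union s t

lemma inter_card_of_distinct {α : Type*} [DecidableEq α] {j : ℕ} {s t : Finset α}
    (hs : s.card = j) (ht : t.card = j) (hne : s ≠ t) : (s ∩ t).card ≤ j - 1 := by
  by_contra hc
  have h1 : (s ∩ t).card ≤ j := le_trans (Finset.card_le_card Finset.inter_subset_left) hs.le
  have h2 : (s ∩ t).card = j := by omega
  have : s ∩ t = s := Finset.eq_of_subset_of_card_le Finset.inter_subset_left (by omega)
  have hsub : s ⊆ t := by rw [← this]; exact Finset.inter_subset_right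
  exact hne (Finset.eq_of_subset_of_card_le hsub (by omega))

lemma mem_core_aux {n j : ℕ} {s t v : Finset (Fin n)} (hj : 1 ≤ j) (hs : s.card = j)
    (ht : t.card = j) (hv : v.card = j) (hst : s ≠ t)
    (hsv : (s ∪ v).card = j + 1) (htv : (t ∪ v).card = j + 1)
    (hns : ¬ s ∩ t ⊆ v) : v ⊆ s ∪ t := by
  obtain ⟨x, hxst, hxv⟩ := Finset.not_subset.1 hns
  have hxs : x ∈ s := (Finset.mem_inter.1 hxst).1
  have hxt : x ∈ t := (Finset.mem_inter.1 hxst).2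
  have key : ∀ w : Finset (Fin n), w.card = j → x ∈ w → (w ∪ v).card = j + 1 →
      w.erase x ⊆ v := by
    intro w hw hxw hwv
    have hiwv : (w ∩ v).card = j - 1 := by
      have := card_union_of_card_inter (s := w) (t := v)
      omega
    have hsub : w ∩ v ⊆ w.erase x := by
      intro y hy
      rw [Finset.mem_erase]
      exact ⟨fun h => hxv (h ▸ (Finset.mem_inter.1 hy).2), (Finset.mem_inter.1 hy).1⟩
    have hce : (w.erase x).card = j - 1 := by rw [Finset.card_erase_of_mem hxw, hw]
    have : w ∩ v = w.erase x := Finset.eq_of_subset_of_card_le hsub (by omega)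
    rw [← this]
    exact Finset.inter_subset_right
  have h1 : s.erase x ⊆ v := key s hs hxs hsv
  have h2 : t.erase x ⊆ v := key t ht hxt htv
  have hu : (s ∪ t).erase x ⊆ v := by
    rw [Finset.erase_union_distrib]
    exact Finset.union_subset h1 h2
  have hucard : j + 1 ≤ (s ∪ t).card := by
    have := inter_card_of_distinct hs ht hst
    have := card_union_of_card_inter (s := s) (t := t)
    omega
  have hxu : x ∈ s ∪ t := Finset.mem_union_left _ hxs
  have hec : ((s ∪ t).erase x).card = (s ∪ t).card - 1 := Finset.card_erase_of_mem hxu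
  have : (s ∪ t).erase x = v := by
    apply Finset.eq_of_subset_of_card_le hu
    omega
  rw [← this]
  exact Finset.erase_subset _ _

lemma clique_has_core {n j : ℕ} (hj : 1 ≤ j) (C : Finset (Finset (Fin n)))
    (hcard : ∀ x ∈ C, x.card = j)
    (hpair : ∀ x ∈ C, ∀ y ∈ C, x ≠ y → (x ∪ y).card = j + 1)
    (hbig : j + 2 ≤ C.card) :
    ∃ B : Finset (Fin n), B.card = j - 1 ∧ ∀ x ∈ C, B ⊆ x := by
  obtain ⟨s, hsC, t, htC, hst⟩ := Finset.one_lt_card.1 (show 1 < C.card by omega)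
  have hs := hcard s hsC
  have ht := hcard t htC
  have hstu := hpair s hsC t htC hst
  have hA0 : (s ∩ t).card = j - 1 := by
    have := card_union_of_card_inter (s := s) (t := t)
    omega
  by_cases hall : ∀ x ∈ C, s ∩ t ⊆ x
  · exact ⟨s ∩ t, hA0, hall⟩
  push_neg at hall
  obtain ⟨u, huC, hnsu⟩ := hall
  have hu := hcard u huC
  have hus : u ≠ s := fun h => hnsu (h ▸ Finset.inter_subset_left)
  have hut : u ≠ t := fun h => hnsu (h ▸ Finset.inter_subset_right)
  have husub : u ⊆ s ∪ t :=
    mem_core_aux hj hs ht hu hst (hpair s hsC u huC (Ne.symm hus))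
      (hpair t htC u huC (Ne.symm hut)) hnsu
  obtain ⟨x, hxst, hxu⟩ := Finset.not_subset.1 hnsu
  exfalso
  have hvsub : ∀ v ∈ C, v ⊆ s ∪ t := by
    intro v hvC
    by_cases hAv : s ∩ t ⊆ v
    · -- v contains x, compare with u
      by_cases hvu : v = u
      · exact hvu ▸ husub
      by_cases hvs : v = s
      · exact hvs ▸ Finset.subset_union_left
      by_cases hvt : v = t
      · exact hvt ▸ Finset.subset_union_right
      have hv := hcard v hvC
      have hxv : x ∈ v := hAv hxst
      have hvu' := hpair v hvC u huC hvu
      have hivu : (v ∩ u).card = j - 1 := by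
        have := card_union_of_card_inter (s := v) (t := u)
        omega
      have hsub : v ∩ u ⊆ v.erase x := by
        intro y hy
        rw [Finset.mem_erase]
        exact ⟨fun h => hxu (h ▸ (Finset.mem_inter.1 hy).2), (Finset.mem_inter.1 hy).1⟩
      have hce : (v.erase x).card = j - 1 := by rw [Finset.card_erase_of_mem hxv, hv]
      have heq : v ∩ u = v.erase x := Finset.eq_of_subset_of_card_le hsub (by omega)
      have herase : v.erase x ⊆ s ∪ t := by
        rw [← heq]
        exact Finset.inter_subset_right.trans husub
      intro y hyv
      by_cases hyx : y = x
      · exact hyx ▸ Finset.mem_union_left _ (Finset.mem_inter.1 hxst).1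
      · exact herase (Finset.mem_erase.2 ⟨hyx, hyv⟩)
    · exact mem_core_aux hj hs ht (hcard v hvC) hst
        (hpair s hsC v hvC fun h => hAv (h ▸ Finset.inter_subset_left))
        (hpair t htC v hvC fun h => hAv (h ▸ Finset.inter_subset_right)) hAv
  have hCsub : C ⊆ (s ∪ t).powersetCard j := by
    intro v hvC
    rw [Finset.mem_powersetCard]
    exact ⟨hvsub v hvC, hcard v hvC⟩
  have := Finset.card_le_card hCsub
  rw [Finset.card_powersetCard, hstu, Nat.choose_succ_self_right] at this
  omega

end Stmt8

namespace Stmt8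

/-- the data carried at each level of the downward induction -/
def Level (n j : ℕ) (g gi : Finset (Fin n) → Finset (Fin n)) : Prop :=
  (∀ s, s.card = j → (g s).card = j) ∧
  (∀ s, s.card = j → (gi s).card = j) ∧
  (∀ s, s.card = j → gi (g s) = s) ∧
  (∀ s, s.card = j → g (gi s) = s) ∧
  (∀ s t, s.card = j → t.card = j → (s ∪ t).card = j + 1 → (g s ∪ g t).card = j + 1) ∧
  (∀ s t, s.card = j → t.card = j → (s ∪ t).card = j + 1 → (gi s ∪ gi t).card = j + 1)

lemma Level.symm {n j : ℕ} {g gi : Finset (Fin n) → Finset (Fin n)} (h : Level n j g gi) :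
    Level n j gi g :=
  ⟨h.2.1, h.1, h.2.2.2.1, h.2.2.1, h.2.2.2.2.2, h.2.2.2.2.1⟩

lemma star_card {n j : ℕ} (hj : 1 ≤ j) (hjn : j ≤ n) {A : Finset (Fin n)}
    (hA : A.card = j - 1) :
    (Finset.univ.filter (fun s : Finset (Fin n) => s.card = j ∧ A ⊆ s)).card = n - j + 1 := by
  rw [count_supersets A (by omega), hA]
  have h1 : j - (j - 1) = 1 := by omega
  have h2 : n - (j - 1) = n - j + 1 := by omega
  rw [h1, h2, Nat.choose_one_right]

lemma exists_star_map {n j : ℕ} (hj : 1 ≤ j) (hnj : 2 * j + 1 ≤ n)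
    {g gi : Finset (Fin n) → Finset (Fin n)} (hL : Level n j g gi)
    {A : Finset (Fin n)} (hA : A.card = j - 1) :
    ∃ B : Finset (Fin n), B.card = j - 1 ∧ ∀ s, s.card = j → (A ⊆ s ↔ B ⊆ g s) := by
  obtain ⟨hg, hgi, hgig, hggi, hJ, hJi⟩ := hL
  set S := Finset.univ.filter (fun s : Finset (Fin n) => s.card = j ∧ A ⊆ s) with hS
  have hScard : S.card = n - j + 1 := star_card hj (by omega) hA
  have hmemS : ∀ s ∈ S, s.card = j ∧ A ⊆ s := by
    intro s hs; simpa [hS] using hs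
  have hinj : Set.InjOn g S := by
    intro a ha b hb hab
    have := hgig a (hmemS a ha).1
    rw [hab, hgig b (hmemS b hb).1] at this
    exact this.symm
  set C := S.image g with hC
  have hCcard : C.card = n - j + 1 := by rw [hC, Finset.card_image_of_injOn hinj, hScard]
  have hCmem : ∀ x ∈ C, x.card = j := by
    intro x hx
    obtain ⟨s, hsS, rfl⟩ := Finset.mem_image.1 hx
    exact hg s (hmemS s hsS).1
  have hCpair : ∀ x ∈ C, ∀ y ∈ C, x ≠ y → (x ∪ y).card = j + 1 := by
    intro x hx y hy hxy
    obtain ⟨s, hsS, rfl⟩ := Finset.mem_image.1 hx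
    obtain ⟨t, htS, rfl⟩ := Finset.mem_image.1 hy
    have hst : s ≠ t := fun h => hxy (h ▸ rfl)
    have hs := hmemS s hsS
    have ht := hmemS t htS
    apply hJ s t hs.1 ht.1
    have hint : A ⊆ s ∩ t := Finset.subset_inter hs.2 ht.2
    have h1 : j - 1 ≤ (s ∩ t).card := hA ▸ Finset.card_le_card hint
    have h2 := inter_card_of_distinct hs.1 ht.1 hst
    have := card_union_of_card_inter (s := s) (t := t)
    omega
  obtain ⟨B, hBcard, hBsub⟩ := clique_has_core hj C hCmem hCpair (by omega)
  have hCstar : C = Finset.univ.filter (fun s : Finset (Fin n) => s.card = j ∧ B ⊆ s) := by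
    apply Finset.eq_of_subset_of_card_le
    · intro x hx
      simp only [Finset.mem_filter, Finset.mem_univ, true_and]
      exact ⟨hCmem x hx, hBsub x hx⟩
    · rw [star_card hj (by omega) hBcard, hCcard]
  refine ⟨B, hBcard, fun s hs => ⟨fun hAs => ?_, fun hBs => ?_⟩⟩
  · apply hBsub
    rw [hC]
    exact Finset.mem_image_of_mem g (by simp [hS, hs, hAs])
  · have : g s ∈ C := by
      rw [hCstar]
      simp only [Finset.mem_filter, Finset.mem_univ, true_and]
      exact ⟨hg s hs, hBs⟩
    obtain ⟨s', hs'S, hs'⟩ := Finset.mem_image.1 this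
    have : s' = s := by
      have h1 := hgig s' (hmemS s' hs'S).1
      rw [hs', hgig s hs] at h1
      exact h1.symm
    rw [← this]
    exact (hmemS s' hs'S).2

end Stmt8

namespace Stmt8

lemma step {n j : ℕ} (hj : 2 ≤ j) (hnj : 2 * j + 1 ≤ n)
    {g gi : Finset (Fin n) → Finset (Fin n)} (hL : Level n j g gi) :
    ∃ g' gi' : Finset (Fin n) → Finset (Fin n), Level n (j - 1) g' gi' ∧
      (∀ A s, A.card = j - 1 → s.card = j → (A ⊆ s ↔ g' A ⊆ g s)) ∧
      (∀ A s, A.card = j - 1 → s.card = j → (A ⊆ s ↔ gi' A ⊆ gi s)) := by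
  classical
  choose! g' hg' using fun (A : Finset (Fin n)) (h : A.card = j - 1) =>
    exists_star_map (by omega) hnj hL (A := A) h
  choose! gi' hgi' using fun (A : Finset (Fin n)) (h : A.card = j - 1) =>
    exists_star_map (by omega) hnj hL.symm (A := A) h
  have hg'c : ∀ A, A.card = j - 1 → (g' A).card = j - 1 := fun A h => (hg' A h).1
  have hgi'c : ∀ A, A.card = j - 1 → (gi' A).card = j - 1 := fun A h => (hgi' A h).1
  have hg'i : ∀ A s, A.card = j - 1 → s.card = j → (A ⊆ s ↔ g' A ⊆ g s) :=
    fun A s h hs => (hg' A h).2 s hs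
  have hgi'i : ∀ A s, A.card = j - 1 → s.card = j → (A ⊆ s ↔ gi' A ⊆ gi s) :=
    fun A s h hs => (hgi' A h).2 s hs
  have hinv1 : ∀ A, A.card = j - 1 → gi' (g' A) = A := by
    intro A hA
    have hsame : ∀ s : Finset (Fin n), s.card = (j - 1) + 1 → A ⊆ s → gi' (g' A) ⊆ s := by
      intro s hs hAs
      have hsj : s.card = j := by omega
      have h1 : g' A ⊆ g s := (hg'i A s hA hsj).1 hAs
      have h2 : gi' (g' A) ⊆ gi (g s) := (hgi'i (g' A) (g s) (hg'c A hA) (hL.1 s hsj)).1 h1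
      rwa [hL.2.2.1 s hsj] at h2
    have hsame' : ∀ s : Finset (Fin n), s.card = (j - 1) + 1 → gi' (g' A) ⊆ s → A ⊆ s := by
      intro s hs hsub
      have hsj : s.card = j := by omega
      have h2 := hgi'i (g' A) (g s) (hg'c A hA) (hL.1 s hsj)
      rw [hL.2.2.1 s hsj] at h2
      exact (hg'i A s hA hsj).2 (h2.2 hsub)
    exact Finset.Subset.antisymm
      (eq_of_same_supersets (by omega) hA (hgi'c _ (hg'c A hA)) hsame)
      (eq_of_same_supersets (by omega) (hgi'c _ (hg'c A hA)) hA hsame')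
  have hinv2 : ∀ A, A.card = j - 1 → g' (gi' A) = A := by
    intro A hA
    have hsame : ∀ s : Finset (Fin n), s.card = (j - 1) + 1 → A ⊆ s → g' (gi' A) ⊆ s := by
      intro s hs hAs
      have hsj : s.card = j := by omega
      have h1 : gi' A ⊆ gi s := (hgi'i A s hA hsj).1 hAs
      have h2 : g' (gi' A) ⊆ g (gi s) := (hg'i (gi' A) (gi s) (hgi'c A hA) (hL.2.1 s hsj)).1 h1
      rwa [hL.2.2.2.1 s hsj] at h2
    have hsame' : ∀ s : Finset (Fin n), s.card = (j - 1) + 1 → g' (gi' A) ⊆ s → A ⊆ s := by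
      intro s hs hsub
      have hsj : s.card = j := by omega
      have h2 := hg'i (gi' A) (gi s) (hgi'c A hA) (hL.2.1 s hsj)
      rw [hL.2.2.2.1 s hsj] at h2
      exact (hgi'i A s hA hsj).2 (h2.2 hsub)
    exact Finset.Subset.antisymm
      (eq_of_same_supersets (by omega) hA (hg'c _ (hgi'c A hA)) hsame)
      (eq_of_same_supersets (by omega) (hg'c _ (hgi'c A hA)) hA hsame')
  have hJ' : ∀ (h h' : Finset (Fin n) → Finset (Fin n)) (hbase : Finset (Fin n) → Finset (Fin n)),
      (∀ A, A.card = j - 1 → (h A).card = j - 1) →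
      (∀ A s, A.card = j - 1 → s.card = j → (A ⊆ s ↔ h A ⊆ hbase s)) →
      (∀ A, A.card = j - 1 → h' (h A) = A) →
      (∀ s, s.card = j → (hbase s).card = j) →
      ∀ A A', A.card = j - 1 → A'.card = j - 1 → (A ∪ A').card = (j - 1) + 1 →
        (h A ∪ h A').card = (j - 1) + 1 := by
    intro h h' hbase hc hi hinv hbc A A' hA hA' hU
    have hAA' : A ≠ A' := by
      intro he
      rw [he, Finset.union_self] at hU
      omega
    have hsj : (A ∪ A').card = j := by omega
    have h1 : h A ⊆ hbase (A ∪ A') := (hi A _ hA hsj).1 Finset.subset_union_left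
    have h2 : h A' ⊆ hbase (A ∪ A') := (hi A' _ hA' hsj).1 Finset.subset_union_right
    have hne : h A ≠ h A' := by
      intro he
      apply hAA'
      rw [← hinv A hA, he, hinv A' hA']
    have hle : (h A ∪ h A').card ≤ j := by
      have := Finset.card_le_card (Finset.union_subset h1 h2)
      rw [hbc _ hsj] at this
      exact this
    have hint := inter_card_of_distinct (hc A hA) (hc A' hA') hne
    have := card_union_of_card_inter (s := h A) (t := h A')
    have hcA := hc A hA
    have hcA' := hc A' hA'
    omega
  refine ⟨g', gi', ⟨hg'c, hgi'c, hinv1, hinv2,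
    hJ' g' gi' g hg'c hg'i hinv1 hL.1, hJ' gi' g' gi hgi'c hgi'i hinv2 hL.2.1⟩,
    hg'i, hgi'i⟩

end Stmt8

namespace Stmt8

lemma johnson_base {n k l : ℕ} (hk : 1 ≤ k) (hkl : k < l) (hsum : n = k + l)
    {g gi : Finset (Fin n) → Finset (Fin n)}
    (hgk : ∀ s, s.card = k → (g s).card = k)
    (hgl : ∀ S, S.card = l → (g S).card = l)
    (hgil : ∀ S, S.card = l → (gi S).card = l)
    (hinvk : ∀ s, s.card = k → gi (g s) = s)
    (hinvl : ∀ S, S.card = l → gi (g S) = S)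
    (hinvl' : ∀ S, S.card = l → g (gi S) = S)
    (hincl : ∀ s S, s.card = k → S.card = l → (s ⊆ S ↔ g s ⊆ g S)) :
    ∀ s t, s.card = k → t.card = k → (s ∪ t).card = k + 1 → (g s ∪ g t).card = k + 1 := by
  intro s t hs ht hu
  classical
  set cn := fun (a b : Finset (Fin n)) =>
    (Finset.univ.filter (fun L : Finset (Fin n) => L.card = l ∧ a ∪ b ⊆ L)).card with hcn
  have hinv : cn (g s) (g t) = cn s t := by
    apply Finset.card_nbij' gi g
    · intro L hL
      simp only [Finset.mem_coe, Finset.mem_filter, Finset.mem_univ, true_and, Finset.union_subset_iff] at hL ⊢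
      obtain ⟨hLl, hsL, htL⟩ := hL
      have h1 : s ⊆ gi L := by
        rw [hincl s (gi L) hs (hgil L hLl), hinvl' L hLl]; exact hsL
      have h2 : t ⊆ gi L := by
        rw [hincl t (gi L) ht (hgil L hLl), hinvl' L hLl]; exact htL
      exact ⟨hgil L hLl, h1, h2⟩
    · intro L hL
      simp only [Finset.mem_coe, Finset.mem_filter, Finset.mem_univ, true_and, Finset.union_subset_iff] at hL ⊢
      obtain ⟨hLl, hsL, htL⟩ := hL
      exact ⟨hgl L hLl, (hincl s L hs hLl).1 hsL, (hincl t L ht hLl).1 htL⟩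
    · intro L hL
      simp only [Finset.mem_coe, Finset.mem_filter, Finset.mem_univ, true_and] at hL
      exact hinvl' L hL.1
    · intro L hL
      simp only [Finset.mem_coe, Finset.mem_filter, Finset.mem_univ, true_and] at hL
      exact hinvl L hL.1
  have hval : cn s t = Nat.choose (l - 1) k := by
    rw [hcn]
    simp only
    rw [count_supersets (s ∪ t) (by omega), hu]
    have h1 : n - (k + 1) = l - 1 := by omega
    have h2 : l - (k + 1) = (l - 1) - k := by omega
    rw [h1, h2, Nat.choose_symm (by omega)]
  -- now analyze (g s ∪ g t).card
  have hst : s ≠ t := by intro h; rw [h, Finset.union_self] at hu; omega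
  have hgst : g s ≠ g t := by
    intro h
    apply hst
    rw [← hinvk s hs, h, hinvk t ht]
  have hlow : k + 1 ≤ (g s ∪ g t).card := by
    have hint := inter_card_of_distinct (hgk s hs) (hgk t ht) hgst
    have := card_union_of_card_inter (s := g s) (t := g t)
    have h1 := hgk s hs
    have h2 := hgk t ht
    omega
  by_contra hne
  have hgt : k + 2 ≤ (g s ∪ g t).card := by omega
  by_cases hle : (g s ∪ g t).card ≤ l
  · have hval2 : cn (g s) (g t) = Nat.choose (n - (g s ∪ g t).card) (l - (g s ∪ g t).card) := by
      rw [hcn]; simp only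
      rw [count_supersets (g s ∪ g t) hle]
    have hsymm : Nat.choose (n - (g s ∪ g t).card) (l - (g s ∪ g t).card)
        = Nat.choose (n - (g s ∪ g t).card) k := by
      have : (n - (g s ∪ g t).card) - (l - (g s ∪ g t).card) = k := by omega
      rw [← this, Nat.choose_symm (by omega)]
    have hlt : Nat.choose (n - (g s ∪ g t).card) k < Nat.choose (l - 1) k :=
      choose_lt hk (by omega) (by omega)
    rw [hval2, hsymm, hval] at hinv
    omega
  · have hempty : cn (g s) (g t) = 0 := by
      rw [hcn]; simp only
      rw [Finset.card_eq_zero, Finset.filter_eq_empty_iff]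
      intro L _
      rintro ⟨hLl, hsub⟩
      have := Finset.card_le_card hsub
      omega
    have hpos : 0 < Nat.choose (l - 1) k := Nat.choose_pos (by omega)
    omega

end Stmt8

namespace Stmt8

lemma ssub_of_sub_lt {α : Type*} [DecidableEq α] {s t : Finset α} (h : s ⊆ t)
    (hc : s.card < t.card) : s ⊂ t := by
  rw [Finset.ssubset_def]
  exact ⟨h, fun h' => absurd (Finset.card_le_card h') (by omega)⟩

lemma exists_intermediate_set {α : Type*} {A B : Finset α} (i : ℕ)
    (h₁ : i + B.card ≤ A.card) (h₂ : B ⊆ A) :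
    ∃ C : Finset α, B ⊆ C ∧ C ⊆ A ∧ C.card = i + B.card := by
  obtain ⟨C, h1, h2, h3⟩ := Finset.exists_subsuperset_card_eq h₂ (by omega : B.card ≤ i + B.card) h₁
  exact ⟨C, h1, h2, h3⟩

lemma adj_of_sub {v w : {s : Finset (Fin n) // s.card = k ∨ s.card = l}} (hkl : k < l)
    (hv : v.1.card = k) (hw : w.1.card = l) (h : v.1 ⊆ w.1) :
    (setInclusionGraph n k l).Adj v w :=
  Or.inl (ssub_of_sub_lt h (by omega))

lemma reach_kk (hk : 1 ≤ k) (hkl : k < l) (hsum : n = k + l) :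
    ∀ (m : ℕ) (s t : Finset (Fin n)) (hs : s.card = k) (ht : t.card = k),
      (t \ s).card ≤ m →
      (setInclusionGraph n k l).Reachable ⟨s, Or.inl hs⟩ ⟨t, Or.inl ht⟩ := by
  intro m
  induction m with
  | zero =>
    intro s t hs ht h0
    have : t ⊆ s := by
      rw [← Finset.sdiff_eq_empty_iff_subset]
      exact Finset.card_eq_zero.1 (by omega)
    have : s = t := (Finset.eq_of_subset_of_card_le this (by omega)).symm
    subst this
    exact SimpleGraph.Reachable.refl _
  | succ m ih =>
    intro s t hs ht hcard
    by_cases h0 : (t \ s).card = 0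
    · have : t ⊆ s := by
        rw [← Finset.sdiff_eq_empty_iff_subset]
        exact Finset.card_eq_zero.1 h0
      have : s = t := (Finset.eq_of_subset_of_card_le this (by omega)).symm
      subst this
      exact SimpleGraph.Reachable.refl _
    obtain ⟨y, hy⟩ := Finset.card_pos.1 (by omega : 0 < (t \ s).card)
    have hyt : y ∈ t := (Finset.mem_sdiff.1 hy).1
    have hys : y ∉ s := (Finset.mem_sdiff.1 hy).2
    have hstne : (s \ t).Nonempty := by
      rw [← Finset.card_pos]
      have h1 : (s \ t).card = s.card - (s ∩ t).card := by
        rw [Finset.card_sdiff_add_card_inter s t |>.symm]; omega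
      have h2 : (t \ s).card = t.card - (t ∩ s).card := by
        rw [Finset.card_sdiff_add_card_inter t s |>.symm]; omega
      rw [Finset.inter_comm] at h2
      omega
    obtain ⟨x, hx⟩ := hstne
    have hxs : x ∈ s := (Finset.mem_sdiff.1 hx).1
    have hxt : x ∉ t := (Finset.mem_sdiff.1 hx).2
    set s' := insert y (s.erase x) with hs'
    have hys' : y ∉ s.erase x := fun h => hys (Finset.mem_of_mem_erase h)
    have hs'c : s'.card = k := by
      rw [hs', Finset.card_insert_of_notMem hys', Finset.card_erase_of_mem hxs, hs]
      omega
    -- common superset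
    have hinscard : (insert y s).card = k + 1 := by
      rw [Finset.card_insert_of_notMem hys, hs]
    obtain ⟨L, hL1, -, hL3⟩ := exists_intermediate_set (l - (k + 1))
      (by rw [hinscard, Finset.card_univ, Fintype.card_fin]; omega)
      (Finset.subset_univ (insert y s))
    have hLl : L.card = l := by rw [hL3, hinscard]; omega
    have hsL : s ⊆ L := (Finset.subset_insert y s).trans hL1
    have hs'L : s' ⊆ L := by
      rw [hs']
      apply Finset.insert_subset (hL1 (Finset.mem_insert_self y s))
      exact ((Finset.erase_subset x s).trans (Finset.subset_insert y s)).trans hL1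
    have hadj1 := adj_of_sub (v := ⟨s, Or.inl hs⟩) (w := ⟨L, Or.inr hLl⟩) hkl hs hLl hsL
    have hadj2 := adj_of_sub (v := ⟨s', Or.inl hs'c⟩) (w := ⟨L, Or.inr hLl⟩) hkl hs'c hLl hs'L
    have hr1 : (setInclusionGraph n k l).Reachable ⟨s, Or.inl hs⟩ ⟨s', Or.inl hs'c⟩ :=
      hadj1.reachable.trans hadj2.reachable.symm
    apply hr1.trans
    apply ih s' t hs'c ht
    have hsub : t \ s' ⊆ (t \ s).erase y := by
      intro z hz
      rw [Finset.mem_erase, Finset.mem_sdiff]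
      obtain ⟨hzt, hzs'⟩ := Finset.mem_sdiff.1 hz
      refine ⟨fun h => hzs' (h ▸ Finset.mem_insert_self y _), hzt, fun hzs => ?_⟩
      apply hzs'
      rw [hs']
      apply Finset.mem_insert_of_mem
      rw [Finset.mem_erase]
      exact ⟨fun h => hxt (h ▸ hzt), hzs⟩
    have := Finset.card_le_card hsub
    rw [Finset.card_erase_of_mem hy] at this
    omega

lemma preconn (hk : 1 ≤ k) (hkl : k < l) (hsum : n = k + l) :
    (setInclusionGraph n k l).Preconnected := by
  have hkey : ∀ v : {s : Finset (Fin n) // s.card = k ∨ s.card = l},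
      ∃ (s : Finset (Fin n)) (hs : s.card = k),
        (setInclusionGraph n k l).Reachable v ⟨s, Or.inl hs⟩ := by
    intro v
    rcases v.2 with h | h
    · exact ⟨v.1, h, SimpleGraph.Reachable.refl v⟩
    · obtain ⟨s, hsub, hsc⟩ := Finset.exists_subset_card_eq (show k ≤ v.1.card by omega)
      refine ⟨s, hsc, ?_⟩
      have := adj_of_sub (v := ⟨s, Or.inl hsc⟩) (w := v) hkl hsc h hsub
      exact this.symm.reachable
  intro u v
  obtain ⟨s, hs, hru⟩ := hkey u
  obtain ⟨t, ht, hrv⟩ := hkey v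
  exact (hru.trans (reach_kk hk hkl hsum (t \ s).card s t hs ht le_rfl)).trans hrv.symm

lemma side_dichotomy (hk : 1 ≤ k) (hkl : k < l) (hsum : n = k + l)
    (f : setInclusionGraph n k l ≃g setInclusionGraph n k l) :
    (∀ v, (f v).1.card = v.1.card) ∨ (∀ v, (f v).1.card ≠ v.1.card) := by
  set P : {s : Finset (Fin n) // s.card = k ∨ s.card = l} → Prop :=
    fun v => (f v).1.card = v.1.card with hP
  have hcards : ∀ v w, (setInclusionGraph n k l).Adj v w →
      (v.1.card = k ∧ w.1.card = l) ∨ (v.1.card = l ∧ w.1.card = k) := by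
    intro v w h
    rcases h with h | h
    · have := Finset.card_lt_card h
      rcases v.2 with h1 | h1 <;> rcases w.2 with h2 | h2 <;> omega
    · have := Finset.card_lt_card h
      rcases v.2 with h1 | h1 <;> rcases w.2 with h2 | h2 <;> omega
  have hadj : ∀ v w, (setInclusionGraph n k l).Adj v w → (P v ↔ P w) := by
    intro v w h
    have h1 := hcards v w h
    have h2 := hcards (f v) (f w) (f.map_rel_iff.2 h)
    rw [hP]
    simp only
    rcases h1 with ⟨ha, hb⟩ | ⟨ha, hb⟩ <;> rcases h2 with ⟨hc, hd⟩ | ⟨hc, hd⟩ <;>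
      rw [ha, hb, hc, hd] <;> constructor <;> intro <;> omega
  have hkey : ∀ v w, (setInclusionGraph n k l).Reachable v w → (P v ↔ P w) := by
    intro v w hvw
    obtain ⟨p⟩ := hvw
    induction p with
    | nil => exact Iff.rfl
    | cons h p ih => exact (hadj _ _ h).trans ih
  by_cases hall : ∀ v, P v
  · exact Or.inl hall
  · push_neg at hall
    obtain ⟨v₀, hv₀⟩ := hall
    refine Or.inr fun v => ?_
    exact fun h => hv₀ ((hkey v v₀ (preconn hk hkl hsum v v₀)).1 h)

end Stmt8

namespace Stmt8

lemma incl_iff_adj (hkl : k < l) {a b : Finset (Fin n)} (ha : a.card = k) (hb : b.card = l) :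
    (a ⊂ b ∨ b ⊂ a) ↔ a ⊆ b := by
  constructor
  · rintro (h | h)
    · exact h.subset
    · have := Finset.card_lt_card h
      omega
  · intro h
    exact Or.inl (ssub_of_sub_lt h (by omega))

lemma exists_perm_of_preserving (hk : 1 ≤ k) (hkl : k < l) (hsum : n = k + l)
    (f : setInclusionGraph n k l ≃g setInclusionGraph n k l)
    (hside : ∀ v, (f v).1.card = v.1.card) :
    ∃ σ : Equiv.Perm (Fin n), ∀ v, (f v).1 = v.1.map σ.toEmbedding := by
  classical
  set F : Finset (Fin n) → Finset (Fin n) :=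
    fun s => if h : s.card = k ∨ s.card = l then (f ⟨s, h⟩).1 else s with hF
  set Fi : Finset (Fin n) → Finset (Fin n) :=
    fun s => if h : s.card = k ∨ s.card = l then (f.symm ⟨s, h⟩).1 else s with hFi
  have hsidei : ∀ v, (f.symm v).1.card = v.1.card := by
    intro v
    have := hside (f.symm v)
    rw [RelIso.apply_symm_apply] at this
    exact this.symm
  have hFapp : ∀ (s : Finset (Fin n)) (h : s.card = k ∨ s.card = l), F s = (f ⟨s, h⟩).1 := by
    intro s h
    rw [hF]
    simp only [dif_pos h]
  have hFiapp : ∀ (s : Finset (Fin n)) (h : s.card = k ∨ s.card = l),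
      Fi s = (f.symm ⟨s, h⟩).1 := by
    intro s h
    rw [hFi]
    simp only [dif_pos h]
  have hFcard : ∀ (s : Finset (Fin n)), (s.card = k ∨ s.card = l) → (F s).card = s.card := by
    intro s h
    rw [hFapp s h]
    exact hside ⟨s, h⟩
  have hFicard : ∀ (s : Finset (Fin n)), (s.card = k ∨ s.card = l) → (Fi s).card = s.card := by
    intro s h
    rw [hFiapp s h]
    exact hsidei ⟨s, h⟩
  have hFiF : ∀ (s : Finset (Fin n)), (s.card = k ∨ s.card = l) → Fi (F s) = s := by
    intro s h
    have h2 : (F s).card = k ∨ (F s).card = l := by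
      rw [hFcard s h]; exact h
    rw [hFiapp (F s) h2]
    have : (⟨F s, h2⟩ : {s : Finset (Fin n) // s.card = k ∨ s.card = l}) = f ⟨s, h⟩ :=
      Subtype.ext (hFapp s h)
    rw [this, RelIso.symm_apply_apply]
  have hFFi : ∀ (s : Finset (Fin n)), (s.card = k ∨ s.card = l) → F (Fi s) = s := by
    intro s h
    have h2 : (Fi s).card = k ∨ (Fi s).card = l := by
      rw [hFicard s h]; exact h
    rw [hFapp (Fi s) h2]
    have : (⟨Fi s, h2⟩ : {s : Finset (Fin n) // s.card = k ∨ s.card = l}) = f.symm ⟨s, h⟩ :=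
      Subtype.ext (hFiapp s h)
    rw [this, RelIso.apply_symm_apply]
  have hincl : ∀ s S : Finset (Fin n), s.card = k → S.card = l → (s ⊆ S ↔ F s ⊆ F S) := by
    intro s S hs hS
    rw [← incl_iff_adj hkl hs hS]
    rw [show (s ⊂ S ∨ S ⊂ s) ↔ (setInclusionGraph n k l).Adj ⟨s, Or.inl hs⟩ ⟨S, Or.inr hS⟩
      from Iff.rfl]
    rw [← f.map_rel_iff]
    rw [show (setInclusionGraph n k l).Adj (f ⟨s, Or.inl hs⟩) (f ⟨S, Or.inr hS⟩) ↔
      ((f ⟨s, Or.inl hs⟩).1 ⊂ (f ⟨S, Or.inr hS⟩).1 ∨ (f ⟨S, Or.inr hS⟩).1 ⊂ (f ⟨s, Or.inl hs⟩).1)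
      from Iff.rfl]
    rw [← hFapp s (Or.inl hs), ← hFapp S (Or.inr hS)]
    exact incl_iff_adj hkl (by rw [hFcard s (Or.inl hs)]; exact hs)
      (by rw [hFcard S (Or.inr hS)]; exact hS)
  have hincli : ∀ s S : Finset (Fin n), s.card = k → S.card = l → (s ⊆ S ↔ Fi s ⊆ Fi S) := by
    intro s S hs hS
    have h1 : (Fi s).card = k := by rw [hFicard s (Or.inl hs)]; exact hs
    have h2 : (Fi S).card = l := by rw [hFicard S (Or.inr hS)]; exact hS
    rw [hincl (Fi s) (Fi S) h1 h2, hFFi s (Or.inl hs), hFFi S (Or.inr hS)]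
  have hJ : ∀ s t : Finset (Fin n), s.card = k → t.card = k → (s ∪ t).card = k + 1 →
      (F s ∪ F t).card = k + 1 :=
    johnson_base hk hkl hsum
      (fun s hs => by rw [hFcard s (Or.inl hs)]; exact hs)
      (fun S hS => by rw [hFcard S (Or.inr hS)]; exact hS)
      (fun S hS => by rw [hFicard S (Or.inr hS)]; exact hS)
      (fun s hs => hFiF s (Or.inl hs))
      (fun S hS => hFiF S (Or.inr hS))
      (fun S hS => hFFi S (Or.inr hS))
      hincl
  have hJi : ∀ s t : Finset (Fin n), s.card = k → t.card = k → (s ∪ t).card = k + 1 →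
      (Fi s ∪ Fi t).card = k + 1 :=
    johnson_base hk hkl hsum
      (fun s hs => by rw [hFicard s (Or.inl hs)]; exact hs)
      (fun S hS => by rw [hFicard S (Or.inr hS)]; exact hS)
      (fun S hS => by rw [hFcard S (Or.inr hS)]; exact hS)
      (fun s hs => hFFi s (Or.inl hs))
      (fun S hS => hFFi S (Or.inr hS))
      (fun S hS => hFiF S (Or.inr hS))
      hincli
  have hLevel : Level n k F Fi :=
    ⟨fun s hs => by rw [hFcard s (Or.inl hs)]; exact hs,
     fun s hs => by rw [hFicard s (Or.inl hs)]; exact hs,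
     fun s hs => hFiF s (Or.inl hs),
     fun s hs => hFFi s (Or.inl hs),
     hJ, hJi⟩
  -- downward induction
  have main : ∀ d, d ≤ k - 1 → ∃ g gi : Finset (Fin n) → Finset (Fin n),
      Level n (k - d) g gi ∧
      (∀ A s, A.card = k - d → s.card = k → (A ⊆ s ↔ g A ⊆ F s)) ∧
      (∀ A s, A.card = k - d → s.card = k → (A ⊆ s ↔ gi A ⊆ Fi s)) := by
    intro d
    induction d with
    | zero =>
      intro _
      refine ⟨F, Fi, by simpa using hLevel, ?_, ?_⟩
      · intro A s hA hs
        simp only [Nat.sub_zero] at hA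
        constructor
        · intro h
          rw [Finset.eq_of_subset_of_card_le h (by omega)]
        · intro h
          have hFA : (F A).card = k := by rw [hFcard A (Or.inl hA)]; exact hA
          have hFs : (F s).card = k := by rw [hFcard s (Or.inl hs)]; exact hs
          have : F A = F s := Finset.eq_of_subset_of_card_le h (by omega)
          have h2 : A = s := by
            rw [← hFiF A (Or.inl hA), this, hFiF s (Or.inl hs)]
          rw [h2]
      · intro A s hA hs
        simp only [Nat.sub_zero] at hA
        constructor
        · intro h
          rw [Finset.eq_of_subset_of_card_le h (by omega)]
        · intro h
          have hFA : (Fi A).card = k := by rw [hFicard A (Or.inl hA)]; exact hA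
          have hFs : (Fi s).card = k := by rw [hFicard s (Or.inl hs)]; exact hs
          have : Fi A = Fi s := Finset.eq_of_subset_of_card_le h (by omega)
          have h2 : A = s := by
            rw [← hFFi A (Or.inl hA), this, hFFi s (Or.inl hs)]
          rw [h2]
    | succ d ihd =>
      intro hd
      obtain ⟨g, gi, hL, hc, hci⟩ := ihd (by omega)
      have hj2 : 2 ≤ k - d := by omega
      have hnj : 2 * (k - d) + 1 ≤ n := by omega
      obtain ⟨g', gi', hL', hcg', hcgi'⟩ := step hj2 hnj hL
      have hidx : k - (d + 1) = (k - d) - 1 := by omega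
      rw [hidx]
      refine ⟨g', gi', hL', ?_, ?_⟩
      · intro A s hA hs
        constructor
        · intro hAs
          obtain ⟨A₂, hAA₂, hA₂s, hA₂c⟩ := exists_intermediate_set 1
            (by omega : 1 + A.card ≤ s.card) hAs
          have hA₂ : A₂.card = k - d := by omega
          exact ((hcg' A A₂ hA hA₂).1 hAA₂).trans ((hc A₂ s hA₂ hs).1 hA₂s)
        · intro hsub
          have hg'A : (g' A).card = (k - d) - 1 := hL'.1 A hA
          have hFs : (F s).card = k := by rw [hFcard s (Or.inl hs)]; exact hs
          obtain ⟨B₂, hB1, hB2, hB3⟩ := exists_intermediate_set 1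
            (by omega : 1 + (g' A).card ≤ (F s).card) hsub
          have hB₂ : B₂.card = k - d := by omega
          have h1 : gi' (g' A) ⊆ gi B₂ := (hcgi' (g' A) B₂ hg'A hB₂).1 hB1
          rw [hL'.2.2.1 A hA] at h1
          have h2 : gi B₂ ⊆ Fi (F s) := (hci B₂ (F s) hB₂ hFs).1 hB2
          rw [hFiF s (Or.inl hs)] at h2
          exact h1.trans h2
      · intro A s hA hs
        constructor
        · intro hAs
          obtain ⟨A₂, hAA₂, hA₂s, hA₂c⟩ := exists_intermediate_set 1
            (by omega : 1 + A.card ≤ s.card) hAs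
          have hA₂ : A₂.card = k - d := by omega
          exact ((hcgi' A A₂ hA hA₂).1 hAA₂).trans ((hci A₂ s hA₂ hs).1 hA₂s)
        · intro hsub
          have hg'A : (gi' A).card = (k - d) - 1 := hL'.2.1 A hA
          have hFs : (Fi s).card = k := by rw [hFicard s (Or.inl hs)]; exact hs
          obtain ⟨B₂, hB1, hB2, hB3⟩ := exists_intermediate_set 1
            (by omega : 1 + (gi' A).card ≤ (Fi s).card) hsub
          have hB₂ : B₂.card = k - d := by omega
          have h1 : g' (gi' A) ⊆ g B₂ := (hcg' (gi' A) B₂ hg'A hB₂).1 hB1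
          rw [hL'.2.2.2.1 A hA] at h1
          have h2 : g B₂ ⊆ F (Fi s) := (hc B₂ (Fi s) hB₂ hFs).1 hB2
          rw [hFFi s (Or.inl hs)] at h2
          exact h1.trans h2
  obtain ⟨g1, gi1, hL1, hc1, hci1⟩ := main (k - 1) le_rfl
  have hk1 : k - (k - 1) = 1 := by omega
  rw [hk1] at hL1 hc1 hci1
  have hsing : ∀ x : Fin n, ∃ y : Fin n, g1 {x} = {y} := by
    intro x
    have := hL1.1 {x} (Finset.card_singleton x)
    exact Finset.card_eq_one.1 this
  choose σ0 hσ0 using hsing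
  have hinj : Function.Injective σ0 := by
    intro x y hxy
    have h1 : g1 {x} = g1 {y} := by rw [hσ0 x, hσ0 y, hxy]
    have h2 : ({x} : Finset (Fin n)) = {y} := by
      rw [← hL1.2.2.1 {x} (Finset.card_singleton x), h1,
        hL1.2.2.1 {y} (Finset.card_singleton y)]
    exact Finset.singleton_injective h2
  set σ : Equiv.Perm (Fin n) := Equiv.ofBijective σ0 (Finite.injective_iff_bijective.1 hinj)
    with hσ
  have hcoe : ∀ x, σ x = σ0 x := fun x => rfl
  have hFk_img : ∀ s : Finset (Fin n), s.card = k → F s = s.image σ0 := by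
    intro s hs
    have hsub : s.image σ0 ⊆ F s := by
      intro y hy
      obtain ⟨x, hxs, rfl⟩ := Finset.mem_image.1 hy
      have : ({x} : Finset (Fin n)) ⊆ s := Finset.singleton_subset_iff.2 hxs
      have h1 : g1 {x} ⊆ F s := (hc1 {x} s (Finset.card_singleton x) hs).1 this
      rw [hσ0 x] at h1
      exact h1 (Finset.mem_singleton_self _)
    have hcards : (F s).card ≤ (s.image σ0).card := by
      rw [Finset.card_image_of_injective s hinj, hFcard s (Or.inl hs)]
    exact (Finset.eq_of_subset_of_card_le hsub hcards).symm
  have hFl_img : ∀ S : Finset (Fin n), S.card = l → F S = S.image σ0 := by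
    intro S hS
    have hsub : S.image σ0 ⊆ F S := by
      intro y hy
      obtain ⟨x, hxS, rfl⟩ := Finset.mem_image.1 hy
      obtain ⟨t, ht, htc⟩ := Finset.exists_subset_card_eq
        (show k - 1 ≤ (S.erase x).card by rw [Finset.card_erase_of_mem hxS, hS]; omega)
      have hxt : x ∉ t := fun h => (Finset.mem_erase.1 (ht h)).1 rfl
      have hsc : (insert x t).card = k := by
        rw [Finset.card_insert_of_notMem hxt, htc]; omega
      have hssub : insert x t ⊆ S :=
        Finset.insert_subset hxS (ht.trans (Finset.erase_subset x S))
      have h1 : F (insert x t) ⊆ F S := (hincl (insert x t) S hsc hS).1 hssub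
      rw [hFk_img (insert x t) hsc] at h1
      exact h1 (Finset.mem_image_of_mem σ0 (Finset.mem_insert_self x t))
    have hcards : (F S).card ≤ (S.image σ0).card := by
      rw [Finset.card_image_of_injective S hinj, hFcard S (Or.inr hS)]
    exact (Finset.eq_of_subset_of_card_le hsub hcards).symm
  refine ⟨σ, fun v => ?_⟩
  have happ : (f v).1 = F v.1 := (hFapp v.1 v.2).symm
  have hmap : v.1.map σ.toEmbedding = v.1.image σ0 := by
    rw [Finset.map_eq_image]
    rfl
  rw [happ, hmap]
  rcases v.2 with h | h
  · exact hFk_img v.1 h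
  · exact hFl_img v.1 h

end Stmt8

namespace Stmt8

lemma psi_surjective (hk : 1 ≤ k) (hkl : k < l) (hsum : n = k + l) :
    Function.Surjective (ψ (n := n) (k := k) (l := l) hsum) := by
  intro f
  have hzm1 : zmodHom (n := n) (k := k) (l := l) hsum 1 = 1 := by
    simp [zmodHom]
  have hzm2 : zmodHom (n := n) (k := k) (l := l) hsum (Multiplicative.ofAdd 1) =
      complAut hsum := by
    simp [zmodHom]
  rcases side_dichotomy hk hkl hsum f with hpres | hswap
  · obtain ⟨σ, hσ⟩ := exists_perm_of_preserving hk hkl hsum f hpres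
    refine ⟨(σ, 1), aut_ext fun v => ?_⟩
    have : ψ (n := n) (k := k) (l := l) hsum (σ, 1) = permHom σ * zmodHom hsum 1 := rfl
    rw [this, hzm1, mul_one]
    exact (hσ v).symm
  · set f2 := f * complAut hsum with hf2
    have hpres2 : ∀ v, (f2 v).1.card = v.1.card := by
      intro v
      have h1 : (f2 v).1 = (f (complAut hsum v)).1 := rfl
      have h2 := hswap (complAut hsum v)
      have h3 : ((complAut hsum v).1).card = n - v.1.card := by
        rw [complAut_apply, Finset.card_compl, Fintype.card_fin]
      have h4 := (f (complAut hsum v)).2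
      rcases v.2 with h5 | h5 <;> rcases h4 with h6 | h6 <;>
        rw [h1, h6] <;> rw [h6, h3, h5] at h2 <;> omega
    obtain ⟨σ, hσ⟩ := exists_perm_of_preserving hk hkl hsum f2 hpres2
    refine ⟨(σ, Multiplicative.ofAdd 1), aut_ext fun v => ?_⟩
    have heq : ψ (n := n) (k := k) (l := l) hsum (σ, Multiplicative.ofAdd 1) =
        permHom σ * zmodHom hsum (Multiplicative.ofAdd 1) := rfl
    rw [heq, hzm2]
    have h1 : ((permHom (k := k) (l := l) σ * complAut hsum) v).1 =
        (v.1ᶜ).map σ.toEmbedding := rfl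
    rw [h1]
    have h2 : f v = f2 (complAut hsum v) := by
      rw [hf2]
      have : (complAut (k := k) (l := l) hsum) ((complAut hsum) v) = v :=
        Subtype.ext (by rw [complAut_apply, complAut_apply, compl_compl])
      rw [RelIso.mul_apply, this]
    rw [h2, hσ (complAut hsum v), complAut_apply]

end Stmt8


/-- For `1 ≤ k < l ≤ n−1` with `n = k + l`, the automorphism group of the
set-inclusion graph `G(n,k,l)` is isomorphic to `Sym([n]) × ℤ₂`. -/
theorem stmt_8 (n k l : ℕ) (hk : 1 ≤ k) (hkl : k < l) (hl : l ≤ n - 1)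
    (hsum : n = k + l) :
    Nonempty ((setInclusionGraph n k l ≃g setInclusionGraph n k l) ≃*
      Equiv.Perm (Fin n) × Multiplicative (ZMod 2)) := by
  exact ⟨(MulEquiv.ofBijective (Stmt8.ψ hsum)
    ⟨Stmt8.psi_injective hk hkl hsum, Stmt8.psi_surjective hk hkl hsum⟩).symm⟩
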